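/- Let Δ be a finite simplicial complex on vertex set {1,…,r} and let I_Δ ⊂ ℚ[D₁,…,D_r] be its Stanley–Reisner ideal, generated by monomials D_{i₁}⋯D_{i_k} with {i₁,…,i_k} not a face of Δ. Suppose J is an ideal with the property that for every nonempty face {i₁,…,i_s} of Δ and every index j in that face, there is a linear form L = c_j D_j + Σ_{i ∉ {i₁,…,i_s}} c_i D_i with c_j ≠ 0 such that L · D_{i₁} ⋯ D_{i_s} ∈ I_Δ + J. Then every monomial in ℚ[D₁,…,D_r] is congruent modulo I_Δ + J to a ℚ-linear combination of squarefree monomials supported on faces of Δ. -/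

import Mathlib

open MvPolynomial

/-- Squarefree reduction modulo the Stanley–Reisner ideal plus linear relations:
given a simplicial complex `Δ` on `{1,…,r}` with Stanley–Reisner ideal `I`, and
an ideal `J` such that for every nonempty face `s` of `Δ` and every `j ∈ s`
there is a linear form `L = c_j D_j + Σ_{i ∉ s} c_i D_i` with `c_j ≠ 0` and
`L · ∏_{i ∈ s} D_i ∈ I + J`, every monomial is congruent modulo `I + J` to a
`ℚ`-linear combination of squarefree monomials supported on faces of `Δ`. -/
theorem squarefree_reduction {r : ℕ} (Δ : Finset (Finset (Fin r)))
    (hΔ : ∀ s ∈ Δ, ∀ t ⊆ s, t ∈ Δ)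
    (I J : Ideal (MvPolynomial (Fin r) ℚ))
    (hI : I = Ideal.span
      {p : MvPolynomial (Fin r) ℚ | ∃ s : Finset (Fin r), s ∉ Δ ∧ p = ∏ i ∈ s, X i})
    (hJ : ∀ s ∈ Δ, s.Nonempty → ∀ j ∈ s, ∃ c : Fin r → ℚ, c j ≠ 0 ∧
      (∀ i ∈ s, i ≠ j → c i = 0) ∧
      (∑ i, C (c i) * X i) * ∏ i ∈ s, X i ∈ I ⊔ J) :
    ∀ a : Fin r →₀ ℕ,
      ∃ q ∈ Submodule.span ℚ
        {p : MvPolynomial (Fin r) ℚ | ∃ s ∈ Δ, p = ∏ i ∈ s, X i},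
      monomial a (1 : ℚ) - q ∈ I ⊔ J := by
  classical
  set e : Finset (Fin r) → (Fin r →₀ ℕ) := fun s => ∑ i ∈ s, Finsupp.single i 1 with he_def
  have he : ∀ (s : Finset (Fin r)) (k : Fin r), e s k = if k ∈ s then 1 else 0 := by
    intro s k
    simp [he_def, Finsupp.finset_sum_apply, Finsupp.single_apply]
  have hprod : ∀ s : Finset (Fin r),
      (∏ i ∈ s, (X i : MvPolynomial (Fin r) ℚ)) = monomial (e s) 1 := by
    intro s
    rw [he_def, monomial_sum_one]
    rfl
  set T : Submodule ℚ (MvPolynomial (Fin r) ℚ) :=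
    Submodule.span ℚ {p : MvPolynomial (Fin r) ℚ | ∃ s ∈ Δ, p = ∏ i ∈ s, X i}
      ⊔ Submodule.restrictScalars ℚ (I ⊔ J) with hT
  have hmemT : ∀ p, p ∈ I ⊔ J → p ∈ T := fun p hp =>
    Submodule.mem_sup_right hp
  have hesupp : ∀ a : Fin r →₀ ℕ, e a.support ≤ a := by
    intro a
    rw [Finsupp.le_def]
    intro k
    rw [he]
    by_cases hk : k ∈ a.support
    · simp only [hk, if_true]
      exact Nat.one_le_iff_ne_zero.mpr (Finsupp.mem_support_iff.mp hk)
    · simp [hk]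
  -- Case 1 : support not a face
  have case1 : ∀ a : Fin r →₀ ℕ, a.support ∉ Δ → monomial a (1:ℚ) ∈ T := by
    intro a hsupp
    apply hmemT
    have hsplit : monomial a (1:ℚ) =
        monomial (a - e a.support) 1 * ∏ i ∈ a.support, X i := by
      rw [hprod, monomial_mul, mul_one, tsub_add_cancel_of_le (hesupp a)]
    rw [hsplit]
    exact Ideal.mul_mem_left _ _ (Ideal.mem_sup_left
      (hI ▸ Ideal.subset_span ⟨a.support, hsupp, rfl⟩))
  -- Case 2 : squarefree on a face
  have case2 : ∀ a : Fin r →₀ ℕ, a.support ∈ Δ → a = e a.support →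
      monomial a (1:ℚ) ∈ T := by
    intro a hsupp hsq
    apply Submodule.mem_sup_left
    apply Submodule.subset_span
    exact ⟨a.support, hsupp, by rw [hprod, ← hsq]⟩
  -- degree helper
  have hdeg_lb : ∀ a : Fin r →₀ ℕ, ∀ j, 2 ≤ a j →
      a.support.card + 1 ≤ ∑ k, a k := by
    intro a j hj
    have hjs : j ∈ a.support := Finsupp.mem_support_iff.mpr (by omega)
    calc a.support.card + 1 = (∑ k ∈ a.support.erase j, 1) + 2 := by
          rw [Finset.sum_const, smul_eq_mul, mul_one,
            Finset.card_erase_of_mem hjs]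
          have : 1 ≤ a.support.card := Finset.card_pos.mpr ⟨j, hjs⟩
          omega
      _ ≤ (∑ k ∈ a.support.erase j, a k) + a j := by
          gcongr with k hk
          · exact Nat.one_le_iff_ne_zero.mpr
              (Finsupp.mem_support_iff.mp (Finset.mem_of_mem_erase hk))
      _ = ∑ k ∈ a.support, a k := by
          rw [add_comm]
          exact Finset.add_sum_erase _ _ hjs
      _ ≤ ∑ k, a k := Finset.sum_le_sum_of_subset (Finset.subset_univ _)
  -- main induction
  have key : ∀ n : ℕ, ∀ a : Fin r →₀ ℕ, (∑ k, a k) ≤ n + a.support.card →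
      monomial a (1:ℚ) ∈ T := by
    intro n
    induction n with
    | zero =>
      intro a hbound
      by_cases hsupp : a.support ∈ Δ
      · by_cases hsq : a = e a.support
        · exact case2 a hsupp hsq
        · exfalso
          have : ∃ j, 2 ≤ a j := by
            by_contra hcon
            push_neg at hcon
            apply hsq
            ext k
            rw [he]
            by_cases hk : k ∈ a.support
            · have h1 := Nat.one_le_iff_ne_zero.mpr (Finsupp.mem_support_iff.mp hk)
              have h2 := hcon k
              simp only [hk, if_true]
              omega
            · simp only [hk, if_false]
              exact Finsupp.notMem_support_iff.mp hk
          obtain ⟨j, hj⟩ := this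
          have := hdeg_lb a j hj
          omega
      · exact case1 a hsupp
    | succ n ih =>
      intro a hbound
      by_cases hsupp : a.support ∈ Δ
      · by_cases hsq : a = e a.support
        · exact case2 a hsupp hsq
        · -- there is a variable of exponent ≥ 2
          have hex : ∃ j, 2 ≤ a j := by
            by_contra hcon
            push_neg at hcon
            apply hsq
            ext k
            rw [he]
            by_cases hk : k ∈ a.support
            · have h1 := Nat.one_le_iff_ne_zero.mpr (Finsupp.mem_support_iff.mp hk)
              have h2 := hcon k
              simp only [hk, if_true]
              omega
            · simp only [hk, if_false]
              exact Finsupp.notMem_support_iff.mp hk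
          obtain ⟨j, hj⟩ := hex
          set s := a.support with hs
          have hjs : j ∈ s := Finsupp.mem_support_iff.mpr (by omega)
          obtain ⟨c, hcj, hc0, hL⟩ := hJ s hsupp ⟨j, hjs⟩ j hjs
          have hale : e s + Finsupp.single j 1 ≤ a := by
            rw [Finsupp.le_def]
            intro k
            rw [Finsupp.add_apply, he, Finsupp.single_apply]
            by_cases hkj : j = k
            · subst hkj; simp [hjs]; omega
            · by_cases hk : k ∈ s
              · have := Nat.one_le_iff_ne_zero.mpr (Finsupp.mem_support_iff.mp hk)
                simp [hk, hkj]; omega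
              · have : a k = 0 := Finsupp.notMem_support_iff.mp hk
                simp [hk, hkj, this]
          set b := a - (e s + Finsupp.single j 1) with hb_def
          have hb : b + (e s + Finsupp.single j 1) = a := tsub_add_cancel_of_le hale
          -- expand the product
          have hterm : ∀ i : Fin r,
              C ((c j)⁻¹) * monomial b 1 * (C (c i) * X i * monomial (e s) 1)
                = C ((c j)⁻¹ * c i) * monomial (b + (Finsupp.single i 1 + e s)) 1 := by
            intro i
            rw [X]
            simp only [C_apply, monomial_mul]
            congr 1
            · abel
            · ring
          have hmem : C ((c j)⁻¹) * monomial b 1 *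
              ((∑ i, C (c i) * X i) * ∏ i ∈ s, X i) ∈ I ⊔ J :=
            Ideal.mul_mem_left _ _ hL
          have hexpand : C ((c j)⁻¹) * monomial b 1 *
              ((∑ i, C (c i) * X i) * ∏ i ∈ s, X i)
              = ∑ i, C ((c j)⁻¹ * c i) * monomial (b + (Finsupp.single i 1 + e s)) 1 := by
            rw [hprod, Finset.sum_mul, Finset.mul_sum]
            exact Finset.sum_congr rfl fun i _ => hterm i
          set S : Finset (Fin r) := Finset.univ.filter (fun i => i ∉ s) with hS
          have hsum_split : (∑ i, C ((c j)⁻¹ * c i) *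
                monomial (b + (Finsupp.single i 1 + e s)) (1:ℚ))
              = monomial a 1 + ∑ i ∈ S, C ((c j)⁻¹ * c i) *
                monomial (b + (Finsupp.single i 1 + e s)) 1 := by
            rw [← Finset.add_sum_erase _ _ (Finset.mem_univ j)]
            congr 1
            · rw [inv_mul_cancel₀ hcj, map_one, one_mul]
              congr 1
              rw [← hb]; abel
            · apply (Finset.sum_subset _ _).symm
              · intro i hiS
                rw [hS, Finset.mem_filter] at hiS
                exact Finset.mem_erase.mpr ⟨fun h => hiS.2 (h ▸ hjs), Finset.mem_univ i⟩
              · intro i hi hiS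
                have his : i ∈ s := by
                  by_contra hcon
                  exact hiS (by rw [hS, Finset.mem_filter]; exact ⟨Finset.mem_univ i, hcon⟩)
                rw [hc0 i his (Finset.mem_erase.mp hi).1, mul_zero, map_zero, zero_mul]
          -- each extra term is in T by induction hypothesis
          have hterms : ∀ i ∈ S, C ((c j)⁻¹ * c i) *
              monomial (b + (Finsupp.single i 1 + e s)) (1:ℚ) ∈ T := by
            intro i hiS
            rw [hS, Finset.mem_filter] at hiS
            have his : i ∉ s := hiS.2
            set a' := b + (Finsupp.single i 1 + e s) with ha'
            have ha'app : ∀ k, a' k = b k + ((if i = k then 1 else 0) + e s k) := by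
              intro k
              rw [ha', Finsupp.add_apply, Finsupp.add_apply, Finsupp.single_apply]
            have hbz : ∀ k, k ∉ s → b k = 0 := by
              intro k hk
              have hak : a k = 0 := Finsupp.notMem_support_iff.mp hk
              rw [hb_def, Finsupp.tsub_apply, hak]
              exact Nat.zero_sub _
            have hsupp' : a'.support = insert i s := by
              ext k
              rw [Finsupp.mem_support_iff, ha'app, he, Finset.mem_insert]
              by_cases hki : i = k
              · subst hki; simp
              · by_cases hk : k ∈ s
                · simp [hk, hki]
                · simp [hk, hbz k hk, eq_comm (a := k) (b := i), hki]
            have hcard : a'.support.card = s.card + 1 := by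
              rw [hsupp', Finset.card_insert_of_notMem his]
            have hdeg : (∑ k, a' k) = ∑ k, a k := by
              have hone : ∀ m : Fin r, (∑ k, (Finsupp.single m 1 : Fin r →₀ ℕ) k) = 1 := by
                intro m; simp [Finsupp.single_apply]
              rw [← hb]
              simp only [ha', Finsupp.add_apply, Finset.sum_add_distrib, hone]
              omega
            have hmem' : monomial a' (1:ℚ) ∈ T := by
              apply ih
              rw [hdeg, hcard]
              omega
            have : C ((c j)⁻¹ * c i) * monomial a' (1:ℚ)
                = ((c j)⁻¹ * c i) • monomial a' (1:ℚ) := by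
              rw [smul_eq_C_mul]
            rw [this]
            exact Submodule.smul_mem _ _ hmem'
          -- conclude
          have hfinal : monomial a (1:ℚ) =
              (C ((c j)⁻¹) * monomial b 1 * ((∑ i, C (c i) * X i) * ∏ i ∈ s, X i))
              - ∑ i ∈ S, C ((c j)⁻¹ * c i) * monomial (b + (Finsupp.single i 1 + e s)) 1 := by
            rw [hexpand, hsum_split]; ring
          rw [hfinal]
          exact Submodule.sub_mem _ (hmemT _ hmem) (Submodule.sum_mem _ hterms)
      · exact case1 a hsupp
  -- conclusion
  intro a
  have hmem : monomial a (1:ℚ) ∈ T := key (∑ k, a k) a (by omega)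
  rw [hT, Submodule.mem_sup] at hmem
  obtain ⟨q, hq, m, hm, hqm⟩ := hmem
  exact ⟨q, hq, by rw [← hqm, add_sub_cancel_left]; exact hm⟩
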